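/- Let (Ω, 𝒜, μ) be a probability space, let u, d ∈ ℝ with d < 0 < u, and let L ∈ ℝ. Let γ : Ω → ℝ be measurable with 0 < γ₋ ≤ γ ≤ γ₊ almost everywhere for constants γ₋, γ₊, and let θ, g : Ω → ℝ be measurable and bounded (with NO restriction on ∫ θ dμ). For p ∈ (0,1) set x(p) := log(−(p·u)/((1−p)·d)), and for (p, Δ) ∈ (0,1) × ℝ define φ_{Δ,p} : Ω → ℝ by φ_{Δ,p} = θ·Δ/(u−d) + (x(p) + g)/(γ·(u−d)). Then there exists exactly one pair (p*, Δ*) ∈ (0,1) × ℝ satisfying both the consistency condition Δ* = (u−d)·∫ φ_{Δ*,p*} dμ and the market-clearing condition ∫ φ_{Δ*,p*} dμ = L; it is given by Δ* = (u−d)·L and p* = (−d) / ( u·exp( ( ∫(g/γ) dμ − (1 − ∫θ dμ)·(u−d)·L ) / ∫(1/γ) dμ ) − d ). -/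

import Mathlib

open MeasureTheory

/-- Auxiliary: solving `log(-(p·u)/((1-p)·d)) = -c` for `p ∈ (0,1)`. -/
lemma stmt4_aux (u d : ℝ) (hd : d < 0) (hu : 0 < u) (c : ℝ) :
    (-d / (u * Real.exp c - d)) ∈ Set.Ioo (0:ℝ) 1 ∧
    Real.log (-((-d / (u * Real.exp c - d)) * u) / ((1 - (-d / (u * Real.exp c - d))) * d)) = -c ∧
    ∀ p ∈ Set.Ioo (0:ℝ) 1, Real.log (-(p * u) / ((1 - p) * d)) = -c →
      p = -d / (u * Real.exp c - d) := by
  have hE : 0 < Real.exp c := Real.exp_pos c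
  have hD : 0 < u * Real.exp c - d := by nlinarith
  have hps0 : 0 < -d / (u * Real.exp c - d) := div_pos (by linarith) hD
  have hps1 : -d / (u * Real.exp c - d) < 1 := (div_lt_one hD).2 (by nlinarith)
  refine ⟨⟨hps0, hps1⟩, ?_, ?_⟩
  · have hratio : -((-d / (u * Real.exp c - d)) * u) / ((1 - (-d / (u * Real.exp c - d))) * d)
        = Real.exp (-c) := by
      rw [Real.exp_neg]
      field_simp
      rw [div_eq_iff hd.ne]
      ring
    rw [hratio, Real.log_exp]
  · rintro p ⟨hp0, hp1⟩ hlog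
    have hnum : -(p * u) < 0 := by nlinarith
    have hden : (1 - p) * d < 0 := by nlinarith
    have hr : 0 < -(p * u) / ((1 - p) * d) := div_pos_of_neg_of_neg hnum hden
    have hre : -(p * u) / ((1 - p) * d) = Real.exp (-c) := by
      rw [← hlog, Real.exp_log hr]
    rw [Real.exp_neg] at hre
    have h1 : -(p * u) = (Real.exp c)⁻¹ * ((1 - p) * d) :=
      (div_eq_iff hden.ne).1 hre
    have heq : -(p * u) * Real.exp c = (1 - p) * d := by
      rw [h1]; field_simp
    rw [eq_div_iff hD.ne']
    linear_combination -heq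

/-- per-node market-clearing mean-field equilibrium (single population).
There is exactly one pair `(p*, Δ*) ∈ (0,1) × ℝ` satisfying the consistency condition
`Δ* = (u-d)·∫ φ_{Δ*,p*} dμ` and the market-clearing condition `∫ φ_{Δ*,p*} dμ = L`, and it is
given by the stated explicit formulas (no restriction on `∫ θ dμ`). -/
theorem stmt_4 {Ω : Type*} [MeasurableSpace Ω] (μ : Measure Ω) [IsProbabilityMeasure μ]
    (u d L : ℝ) (hd : d < 0) (hu : 0 < u)
    (γ θ g : Ω → ℝ) (hγm : Measurable γ) (γlo γhi : ℝ) (hγlo : 0 < γlo)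
    (hγb : ∀ᵐ ω ∂μ, γlo ≤ γ ω ∧ γ ω ≤ γhi)
    (hθm : Measurable θ) (Cθ : ℝ) (hθb : ∀ᵐ ω ∂μ, |θ ω| ≤ Cθ)
    (hgm : Measurable g) (Cg : ℝ) (hgb : ∀ᵐ ω ∂μ, |g ω| ≤ Cg) :
    let x : ℝ → ℝ := fun p => Real.log (-(p * u) / ((1 - p) * d))
    let φ : ℝ → ℝ → Ω → ℝ := fun Δ p ω =>
      θ ω * Δ / (u - d) + (x p + g ω) / (γ ω * (u - d))
    let pstar : ℝ := (-d) / (u * Real.exp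
      (((∫ ω, g ω / γ ω ∂μ) - (1 - ∫ ω, θ ω ∂μ) * (u - d) * L) / (∫ ω, 1 / γ ω ∂μ)) - d)
    let Δstar : ℝ := (u - d) * L
    pstar ∈ Set.Ioo (0 : ℝ) 1 ∧
    Δstar = (u - d) * ∫ ω, φ Δstar pstar ω ∂μ ∧
    (∫ ω, φ Δstar pstar ω ∂μ) = L ∧
    ∀ p Δ : ℝ, p ∈ Set.Ioo (0 : ℝ) 1 →
      Δ = (u - d) * ∫ ω, φ Δ p ω ∂μ → (∫ ω, φ Δ p ω ∂μ) = L →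
      p = pstar ∧ Δ = Δstar := by
  intro x φ pstar Δstar
  have hud : (0:ℝ) < u - d := by linarith
  obtain ⟨ω₀, hg0⟩ := hgb.exists
  have hCg : 0 ≤ Cg := le_trans (abs_nonneg _) hg0
  obtain ⟨ω₁, hγ1, hγ2⟩ := hγb.exists
  have hγhi : 0 < γhi := lt_of_lt_of_le hγlo (le_trans hγ1 hγ2)
  -- integrability
  have hθi : Integrable θ μ := by
    apply (integrable_const Cθ).mono' hθm.aestronglyMeasurable
    filter_upwards [hθb] with ω h
    simpa using h
  have hγi : Integrable (fun ω => 1 / γ ω) μ := by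
    apply (integrable_const (1/γlo)).mono' (measurable_const.div hγm).aestronglyMeasurable
    filter_upwards [hγb] with ω h
    have hγpos : 0 < γ ω := lt_of_lt_of_le hγlo h.1
    show ‖1 / γ ω‖ ≤ 1 / γlo
    rw [Real.norm_eq_abs, abs_of_pos (one_div_pos.mpr hγpos)]
    exact one_div_le_one_div_of_le hγlo h.1
  have hgγi : Integrable (fun ω => g ω / γ ω) μ := by
    apply (integrable_const (Cg/γlo)).mono' (hgm.div hγm).aestronglyMeasurable
    filter_upwards [hγb, hgb] with ω h hg
    have hγpos : 0 < γ ω := lt_of_lt_of_le hγlo h.1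
    show ‖g ω / γ ω‖ ≤ Cg / γlo
    rw [Real.norm_eq_abs, abs_div, abs_of_pos hγpos]
    exact div_le_div₀ hCg hg hγlo h.1
  -- notation
  set T := ∫ ω, θ ω ∂μ with hT
  set A := ∫ ω, 1 / γ ω ∂μ with hA
  set B := ∫ ω, g ω / γ ω ∂μ with hB
  set c := (B - (1 - T) * (u - d) * L) / A with hc
  have hApos : 0 < A := by
    have h1 : (1/γhi : ℝ) ≤ A := by
      rw [hA, ← (by simp : ∫ _ : Ω, (1/γhi : ℝ) ∂μ = 1/γhi)]
      refine integral_mono_ae (integrable_const _) hγi ?_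
      filter_upwards [hγb] with ω h
      exact one_div_le_one_div_of_le (lt_of_lt_of_le hγlo h.1) h.2
    have : (0:ℝ) < 1/γhi := by positivity
    linarith
  -- integral formula
  have key : ∀ Δ p : ℝ, ∫ ω, φ Δ p ω ∂μ
      = Δ / (u-d) * T + ((x p) / (u-d) * A + 1 / (u-d) * B) := by
    intro Δ p
    have hrw : (fun ω => φ Δ p ω) = fun ω =>
        Δ / (u-d) * θ ω + ((x p) / (u-d) * (1 / γ ω) + 1 / (u-d) * (g ω / γ ω)) := by
      funext ω
      simp only [φ]
      simp only [div_eq_mul_inv, mul_inv, one_mul]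
      ring
    have h2i : Integrable (fun ω => (x p) / (u-d) * (1 / γ ω)) μ := hγi.const_mul _
    have h3i : Integrable (fun ω => 1 / (u-d) * (g ω / γ ω)) μ := hgγi.const_mul _
    have h23i : Integrable (fun ω =>
        (x p) / (u-d) * (1 / γ ω) + 1 / (u-d) * (g ω / γ ω)) μ := h2i.add h3i
    rw [hrw, integral_add (hθi.const_mul _) h23i, integral_add h2i h3i,
      integral_const_mul, integral_const_mul, integral_const_mul]
  have key2 : ∀ Δ p : ℝ, (u - d) * ∫ ω, φ Δ p ω ∂μ = Δ * T + x p * A + B := by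
    intro Δ p
    rw [key]
    field_simp
    ring
  have hcA : c * A = B - (1 - T) * (u - d) * L := by
    rw [hc]; exact div_mul_cancel₀ _ hApos.ne'
  -- characterization of the two conditions
  have hchar : ∀ p Δ : ℝ,
      (Δ = (u - d) * ∫ ω, φ Δ p ω ∂μ ∧ (∫ ω, φ Δ p ω ∂μ) = L)
      ↔ (Δ = (u - d) * L ∧ x p = -c) := by
    intro p Δ
    constructor
    · rintro ⟨h1, h2⟩
      rw [h2] at h1
      refine ⟨h1, ?_⟩
      have e := key2 Δ p
      rw [h2, h1] at e
      have hxA : x p * A = -c * A := by linear_combination -e + hcA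
      exact mul_right_cancel₀ hApos.ne' hxA
    · rintro ⟨h1, h2⟩
      have e2 : (u - d) * (∫ ω, φ Δ p ω ∂μ) = (u - d) * L := by
        rw [key2 Δ p, h1, h2]
        linear_combination -hcA
      have hI : (∫ ω, φ Δ p ω ∂μ) = L := mul_left_cancel₀ hud.ne' e2
      exact ⟨by rw [hI, h1], hI⟩
  -- apply the auxiliary lemma
  obtain ⟨hmem, hlog, huniq⟩ := stmt4_aux u d hd hu c
  have hpstar : pstar = -d / (u * Real.exp c - d) := rfl
  have hxps : x pstar = -c := by rw [hpstar]; exact hlog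
  have hmain := (hchar pstar Δstar).2 ⟨rfl, hxps⟩
  refine ⟨hpstar ▸ hmem, hmain.1, hmain.2, ?_⟩
  intro p Δ hp h1 h2
  obtain ⟨hΔ, hxp⟩ := (hchar p Δ).1 ⟨h1, h2⟩
  exact ⟨hpstar ▸ huniq p hp hxp, hΔ⟩
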